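/- Let σ, ω_b, ω_s be finite measures on a set B with σ(B), ω_s(B) > 0, suppose ω_b ≪ σ ≪ ω_s, and suppose the reverse Hölder inequalities: (1/σ(B)) ∫_B (dω_b/dσ)^4 dσ ≤ (1+ε)(ω_b(B)/σ(B))^4 and (1/ω_s(B)) ∫_B (dσ/dω_s)^3 dω_s ≤ (1+ε)(σ(B)/ω_s(B))^3. Then (1/ω_s(B)) ∫_B (dω_b/dω_s)^2 dω_s ≤ (1+ε)(ω_b(B)/ω_s(B))^2. -/

import Mathlib

open MeasureTheory Set

/-- Here `g = dσ/dω_s` and `f = dω_b/dσ`, so that `σ(B) = ∫_B g dω_s`,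
`ω_b(B) = ∫_B f·g dω_s`, and `dω_b/dω_s = f·g`. -/
theorem reverse_holder_composition {α : Type*} [MeasurableSpace α]
    (ωs : Measure α) [IsFiniteMeasure ωs]
    (B : Set α) (hB : MeasurableSet B)
    (f g : α → ℝ) (hf : ∀ x, 0 ≤ f x) (hg : ∀ x, 0 ≤ g x)
    (hfm : Measurable f) (hgm : Measurable g)
    (ε : ℝ) (hε : 0 ≤ ε)
    (hωsB : 0 < (ωs B).toReal)
    (hσB : 0 < ∫ x in B, g x ∂ωs)
    (hint1 : IntegrableOn (fun x => f x ^ 4 * g x) B ωs)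
    (hint2 : IntegrableOn (fun x => g x ^ 3) B ωs)
    (hint3 : IntegrableOn (fun x => (f x * g x) ^ 2) B ωs)
    (hint4 : IntegrableOn (fun x => f x * g x) B ωs)
    (hint5 : IntegrableOn g B ωs)
    (hRH1 : (∫ x in B, g x ∂ωs)⁻¹ * ∫ x in B, f x ^ 4 * g x ∂ωs
        ≤ (1 + ε) * ((∫ x in B, f x * g x ∂ωs) / ∫ x in B, g x ∂ωs) ^ 4)
    (hRH2 : (ωs B).toReal⁻¹ * ∫ x in B, g x ^ 3 ∂ωs
        ≤ (1 + ε) * ((∫ x in B, g x ∂ωs) / (ωs B).toReal) ^ 3) :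
    (ωs B).toReal⁻¹ * ∫ x in B, (f x * g x) ^ 2 ∂ωs
      ≤ (1 + ε) * ((∫ x in B, f x * g x ∂ωs) / (ωs B).toReal) ^ 2 := by
  set S := ∫ x in B, g x ∂ωs with hS
  set A := ∫ x in B, f x * g x ∂ωs with hA
  set W := (ωs B).toReal with hW
  set P := ∫ x in B, f x ^ 4 * g x ∂ωs with hPdef
  set Q := ∫ x in B, g x ^ 3 ∂ωs with hQdef
  set I := ∫ x in B, (f x * g x) ^ 2 ∂ωs with hIdef
  have hA0 : 0 ≤ A := setIntegral_nonneg hB fun x _ => mul_nonneg (hf x) (hg x)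
  have hP0 : 0 ≤ P := setIntegral_nonneg hB fun x _ =>
    mul_nonneg (pow_nonneg (hf x) 4) (hg x)
  have hQ0 : 0 ≤ Q := setIntegral_nonneg hB fun x _ => pow_nonneg (hg x) 3
  have hI0 : 0 ≤ I := setIntegral_nonneg hB fun x _ => sq_nonneg _
  have hε1 : (0:ℝ) < 1 + ε := by linarith
  -- Cauchy–Schwarz: I ≤ √P · √Q
  set u : α → ℝ := fun x => f x ^ 2 * Real.sqrt (g x) with hu
  set v : α → ℝ := fun x => g x * Real.sqrt (g x) with hv
  have hu2 : ∀ x, u x ^ 2 = f x ^ 4 * g x := by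
    intro x
    simp only [hu]
    rw [mul_pow, Real.sq_sqrt (hg x)]
    ring
  have hv2 : ∀ x, v x ^ 2 = g x ^ 3 := by
    intro x
    simp only [hv]
    rw [mul_pow, Real.sq_sqrt (hg x)]
    ring
  have huv : ∀ x, u x * v x = (f x * g x) ^ 2 := by
    intro x
    simp only [hu, hv]
    have h1 : Real.sqrt (g x) * Real.sqrt (g x) = g x := Real.mul_self_sqrt (hg x)
    calc f x ^ 2 * Real.sqrt (g x) * (g x * Real.sqrt (g x))
        = f x ^ 2 * g x * (Real.sqrt (g x) * Real.sqrt (g x)) := by ring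
      _ = (f x * g x) ^ 2 := by rw [h1]; ring
  have hum : Measurable u := (hfm.pow_const 2).mul hgm.sqrt
  have hvm : Measurable v := hgm.mul hgm.sqrt
  have hu_mem : MemLp u (ENNReal.ofReal 2) (ωs.restrict B) := by
    rw [show ENNReal.ofReal (2:ℝ) = 2 by norm_num]
    refine (memLp_two_iff_integrable_sq hum.aestronglyMeasurable).2 ?_
    exact hint1.congr_fun (fun x _ => (hu2 x).symm) hB
  have hv_mem : MemLp v (ENNReal.ofReal 2) (ωs.restrict B) := by
    rw [show ENNReal.ofReal (2:ℝ) = 2 by norm_num]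
    refine (memLp_two_iff_integrable_sq hvm.aestronglyMeasurable).2 ?_
    exact hint2.congr_fun (fun x _ => (hv2 x).symm) hB
  have hpq : Real.HolderConjugate 2 2 := ⟨by norm_num, by norm_num, by norm_num⟩
  have hCS : I ≤ Real.sqrt P * Real.sqrt Q := by
    have h := integral_mul_le_Lp_mul_Lq_of_nonneg hpq
      (Filter.Eventually.of_forall fun x => mul_nonneg (sq_nonneg _) (Real.sqrt_nonneg _))
      (Filter.Eventually.of_forall fun x => mul_nonneg (hg x) (Real.sqrt_nonneg _))
      hu_mem hv_mem
    have e1 : ∫ x in B, u x * v x ∂ωs = I := by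
      rw [hIdef]; exact setIntegral_congr_fun hB fun x _ => huv x
    have e2 : ∫ x in B, u x ^ (2:ℝ) ∂ωs = P := by
      rw [hPdef]
      refine setIntegral_congr_fun hB fun x _ => ?_
      rw [show (2:ℝ) = ((2:ℕ):ℝ) by norm_num, Real.rpow_natCast]
      exact hu2 x
    have e3 : ∫ x in B, v x ^ (2:ℝ) ∂ωs = Q := by
      rw [hQdef]
      refine setIntegral_congr_fun hB fun x _ => ?_
      rw [show (2:ℝ) = ((2:ℕ):ℝ) by norm_num, Real.rpow_natCast]
      exact hv2 x
    rw [e1, e2, e3] at h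
    rw [Real.sqrt_eq_rpow, Real.sqrt_eq_rpow]
    exact h
  -- bounds on P and Q
  have hSne : S ≠ 0 := ne_of_gt hσB
  have hWne : W ≠ 0 := ne_of_gt hωsB
  have hP1 : P ≤ (1 + ε) * A ^ 4 / S ^ 3 := by
    have h := (inv_mul_le_iff₀ hσB).1 hRH1
    calc P ≤ S * ((1 + ε) * (A / S) ^ 4) := h
      _ = (1 + ε) * A ^ 4 / S ^ 3 := by field_simp
  have hQ1 : Q ≤ (1 + ε) * S ^ 3 / W ^ 2 := by
    have h := (inv_mul_le_iff₀ hωsB).1 hRH2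
    calc Q ≤ W * ((1 + ε) * (S / W) ^ 3) := h
      _ = (1 + ε) * S ^ 3 / W ^ 2 := by field_simp
  have hbound : I ≤ (1 + ε) * A ^ 2 / W := by
    have h1 : Real.sqrt P * Real.sqrt Q
        ≤ Real.sqrt ((1 + ε) * A ^ 4 / S ^ 3) * Real.sqrt ((1 + ε) * S ^ 3 / W ^ 2) := by
      exact mul_le_mul (Real.sqrt_le_sqrt hP1) (Real.sqrt_le_sqrt hQ1)
        (Real.sqrt_nonneg _) (Real.sqrt_nonneg _)
    have h2 : Real.sqrt ((1 + ε) * A ^ 4 / S ^ 3) * Real.sqrt ((1 + ε) * S ^ 3 / W ^ 2)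
        = (1 + ε) * A ^ 2 / W := by
      rw [← Real.sqrt_mul (by positivity) _]
      have : (1 + ε) * A ^ 4 / S ^ 3 * ((1 + ε) * S ^ 3 / W ^ 2)
          = ((1 + ε) * A ^ 2 / W) ^ 2 := by field_simp
      rw [this, Real.sqrt_sq (by positivity)]
    calc I ≤ Real.sqrt P * Real.sqrt Q := hCS
      _ ≤ Real.sqrt ((1 + ε) * A ^ 4 / S ^ 3) * Real.sqrt ((1 + ε) * S ^ 3 / W ^ 2) := h1
      _ = (1 + ε) * A ^ 2 / W := h2
  calc W⁻¹ * I ≤ W⁻¹ * ((1 + ε) * A ^ 2 / W) := by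
        exact mul_le_mul_of_nonneg_left hbound (by positivity)
    _ = (1 + ε) * (A / W) ^ 2 := by rw [div_pow]; ring
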